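/- There exists a bijective ℝ-linear map f : ℝ² → ℂ such that f(𝓔) = 𝓡 and f(ℤ²) = ℤ + ℤα = {p + qα : p, q ∈ ℤ}. -/

import Mathlib

open scoped BigOperators

/-- The recurrent integer sequence `T` with `T 0 = 1`, `T 1 = a`, `T 2 = a² + b`,
`T (n+3) = a T(n+2) + b T(n+1) + T n`. -/
def Tseq (a b : ℤ) : ℕ → ℤ
  | 0 => 1
  | 1 => a
  | 2 => a ^ 2 + b
  | n + 3 => a * Tseq a b (n + 2) + b * Tseq a b (n + 1) + Tseq a b n

/-- The comparison word `(a-1)(a+b-1)(a+b)(a+b)⋯`. -/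
def ruleWord (a b : ℤ) : ℕ → ℤ
  | 0 => a - 1
  | 1 => a + b - 1
  | _ + 2 => a + b

/-- The word `d j, d (j-1), …, d (j-k)` is lexicographically ≤ the word
`ruleWord 0, …, ruleWord k`. -/
def WordLe (a b : ℤ) (d : ℕ → ℕ) (j k : ℕ) : Prop :=
  (∀ i ≤ k, (d (j - i) : ℤ) = ruleWord a b i) ∨
    ∃ m ≤ k, (∀ i < m, (d (j - i) : ℤ) = ruleWord a b i) ∧ (d (j - m) : ℤ) < ruleWord a b m

/-- Every finite factor `d j ⋯ d (j-k)` is lexicographically ≤ `(a-1)(a+b-1)(a+b)⋯(a+b)`. -/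
def AdmissibleWord (a b : ℤ) (d : ℕ → ℕ) : Prop :=
  ∀ j k : ℕ, k ≤ j → WordLe a b d j k

/-- An admissible finitely supported digit sequence. -/
def IsAdmissible (a b : ℤ) (d : ℕ → ℕ) : Prop :=
  (Function.support d).Finite ∧ AdmissibleWord a b d

/-- The Rauzy norm `𝒩(x₁,x₂) = |(α + b/β)x₁ + x₂/β|`. -/
noncomputable def rnorm (b : ℤ) (β : ℝ) (α : ℂ) (x : Fin 2 → ℝ) : ℝ :=
  ‖(α + (b : ℂ) / (β : ℂ)) * (x 0 : ℂ) + (x 1 : ℂ) / (β : ℂ)‖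

/-- `𝒩₀(w) = inf {𝒩(w - p) : p ∈ ℤ²}`. -/
noncomputable def rnorm0 (b : ℤ) (β : ℝ) (α : ℂ) (w : Fin 2 → ℝ) : ℝ :=
  sInf {r | ∃ g : Fin 2 → ℤ, r = rnorm b β α (w - fun i => (g i : ℝ))}

/-- `δ(N) = N(1/β, 1/β²) − (Σ_{j≥1} d_j T_{j-1}, Σ_{j≥2} d_j T_{j-2})`. -/
noncomputable def deltaVec (a b : ℤ) (β : ℝ) (N : ℕ) (d : ℕ → ℕ) : Fin 2 → ℝ :=
  ![(N : ℝ) / β - ∑ᶠ j : ℕ, (d (j + 1) : ℝ) * (Tseq a b j : ℝ),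
    (N : ℝ) / β ^ 2 - ∑ᶠ j : ℕ, (d (j + 2) : ℝ) * (Tseq a b j : ℝ)]

/-- The matrix `B`. -/
noncomputable def Bmat (b : ℤ) (β : ℝ) : Matrix (Fin 2) (Fin 2) ℝ :=
  !![-b / β, -1 / β; 1 - b / β ^ 2, -1 / β ^ 2]

/-- The Rauzy fractal `𝓡 = {Σ_{i≥2} d_i α^i}` over admissible digit sequences,
where the digit sequence `(d_i)_{i≥2}` is encoded as `i ↦ d (i+2)`. -/
def RauzyFractal (a b : ℤ) (α : ℂ) : Set ℂ :=
  {z | ∃ d : ℕ → ℕ, AdmissibleWord a b d ∧ z = ∑' i : ℕ, (d i : ℂ) * α ^ (i + 2)}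

/-- `𝓔 ⊂ ℝ²` is the closure of the set of points `δ(N)`, `N` a positive integer. -/
noncomputable def EcalSet (a b : ℤ) (β : ℝ) : Set (Fin 2 → ℝ) :=
  closure {x | ∃ N : ℕ, 0 < N ∧ ∃ d : ℕ → ℕ, IsAdmissible a b d ∧
    (N : ℤ) = ∑ᶠ i : ℕ, (d i : ℤ) * Tseq a b i ∧ x = deltaVec a b β N d}

/- ### Auxiliary definitions and lemmas -/

/-- `T` shifted by one: `Xseq n = T (n-1)`, with value `0` at `n = 0`. -/
def Xseq (a b : ℤ) : ℕ → ℤ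
  | 0 => 0
  | i + 1 => Tseq a b i

/-- `T` shifted by two: `Yseq n = T (n-2)`, vanishing at `n = 0, 1`. -/
def Yseq (a b : ℤ) : ℕ → ℤ
  | 0 => 0
  | 1 => 0
  | i + 2 => Tseq a b i

lemma Tseq_rec (a b : ℤ) (n : ℕ) :
    Tseq a b (n+3) = a * Tseq a b (n+2) + b * Tseq a b (n+1) + Tseq a b n := rfl

lemma Xseq_rec (a b : ℤ) (n : ℕ) :
    Xseq a b (n+3) = a * Xseq a b (n+2) + b * Xseq a b (n+1) + Xseq a b n := by
  match n with
  | 0 => simp [Xseq, Tseq]; ring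
  | m + 1 => simp only [Xseq]; exact Tseq_rec a b m

lemma Yseq_rec (a b : ℤ) (n : ℕ) :
    Yseq a b (n+3) = a * Yseq a b (n+2) + b * Yseq a b (n+1) + Yseq a b n := by
  match n with
  | 0 => simp [Yseq, Xseq, Tseq]
  | 1 => simp [Yseq, Xseq, Tseq]; ring
  | m + 2 => simp only [Yseq]; exact Tseq_rec a b m

lemma Tseq_pos (a b : ℤ) (ha : 3 ≤ a) (hab : -a+1 ≤ b) (hb : b ≤ -2) :
    ∀ n, 0 < Tseq a b n ∧ Tseq a b n < Tseq a b (n+1) := by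
  intro n
  induction n using Nat.strong_induction_on with
  | _ n ih =>
    match n with
    | 0 =>
      refine ⟨?_, ?_⟩
      · show (0:ℤ) < 1; norm_num
      · show (1:ℤ) < a; omega
    | 1 =>
      constructor
      · show (0:ℤ) < a; omega
      · show (a:ℤ) < a^2 + b; nlinarith
    | (m+2) =>
      obtain ⟨h0, h1⟩ := ih m (by omega)
      obtain ⟨h2, h3⟩ := ih (m+1) (by omega)
      simp only [show m+1+1 = m+2 from rfl] at h3
      refine ⟨by omega, ?_⟩
      show Tseq a b (m+2) < a * Tseq a b (m+2) + b * Tseq a b (m+1) + Tseq a b m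
      have hb' : b * Tseq a b (m+2) ≤ b * Tseq a b (m+1) := by
        apply mul_le_mul_of_nonpos_left (le_of_lt h3) (by omega)
      nlinarith

lemma wordLe_congr (a b : ℤ) (d₁ d₂ : ℕ → ℕ) (j₁ j₂ k : ℕ)
    (h : ∀ i ≤ k, d₁ (j₁ - i) = d₂ (j₂ - i)) : WordLe a b d₁ j₁ k → WordLe a b d₂ j₂ k := by
  rintro (H | ⟨m, hm, H1, H2⟩)
  · exact Or.inl fun i hi => by rw [← h i hi]; exact H i hi
  · exact Or.inr ⟨m, hm, fun i hi => by rw [← h i ((le_of_lt hi).trans hm)]; exact H1 i hi,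
      by rw [← h m hm]; exact H2⟩

lemma admissible_of_small (a b : ℤ) (d : ℕ → ℕ) (h : ∀ j, (d j : ℤ) < a - 1) :
    AdmissibleWord a b d := fun j k _ =>
  Or.inr ⟨0, Nat.zero_le k, fun i hi => absurd hi (Nat.not_lt_zero i), by
    simpa [ruleWord] using h j⟩

lemma admissible_trunc (a b : ℤ) (ha : 3 ≤ a) (d : ℕ → ℕ) (K : ℕ)
    (hd : AdmissibleWord a b d) :
    AdmissibleWord a b (fun i => if i < K then d i else 0) := by
  intro j k hk
  by_cases hj : j < K
  · refine wordLe_congr a b d _ j j k (fun i hi => ?_) (hd j k hk)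
    simp [Nat.lt_of_le_of_lt (Nat.sub_le j i) hj]
  · refine Or.inr ⟨0, Nat.zero_le k, fun i hi => absurd hi (Nat.not_lt_zero i), ?_⟩
    simp [ruleWord, hj]
    omega

lemma digit_le (a b : ℤ) (d : ℕ → ℕ) (hd : AdmissibleWord a b d) (j : ℕ) :
    (d j : ℤ) ≤ a - 1 := by
  rcases hd j 0 (Nat.zero_le j) with H | ⟨m, hm, _, H2⟩
  · simpa [ruleWord] using (H 0 le_rfl).le
  · interval_cases m
    simpa [ruleWord] using H2.le

lemma main_mul (a b : ℤ) (β : ℝ) (hβroot : β ^ 3 = a * β ^ 2 + b * β + 1)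
    (α : ℂ) (hαim : α.im ≠ 0) (hαroot : α ^ 3 = a * α ^ 2 + b * α + 1) (i : ℕ) :
    ((-1:ℂ) - b*α) * ((Tseq a b i : ℂ) * (β:ℂ) - (Xseq a b i : ℂ) * (β:ℂ)^2)
      + (-α) * ((Tseq a b i : ℂ) - (Yseq a b i : ℂ) * (β:ℂ)^2) = α^(i+2) * (β:ℂ)^2 := by
  have key : α^2*(β:ℂ)^2 + b*α*(β:ℂ) + α + (β:ℂ) = 0 := by
    have hβc3 : (β:ℂ) ^ 3 = a * (β:ℂ) ^ 2 + b * (β:ℂ) + 1 := by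
      exact_mod_cast congrArg (Complex.ofReal) hβroot
    have hne : α - (β:ℂ) ≠ 0 := by
      intro h; apply hαim; rw [sub_eq_zero.mp h]; simp
    have h2 : (α - (β:ℂ)) * (α^2*(β:ℂ)^2 + b*α*(β:ℂ) + α + (β:ℂ)) = (α - (β:ℂ)) * 0 := by
      linear_combination (β:ℂ)^2 * hαroot - α^2 * hβc3
    simpa using mul_left_cancel₀ hne h2
  induction i using Nat.strong_induction_on with
  | _ i ih =>
    match i with
    | 0 =>
      simp only [Tseq, Xseq, Yseq]
      push_cast
      linear_combination (-1 : ℂ) * key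
    | 1 =>
      simp only [Tseq, Xseq, Yseq]
      push_cast
      linear_combination (-(a:ℂ)) * key - (β:ℂ)^2 * hαroot
    | 2 =>
      simp only [Tseq, Xseq, Yseq]
      push_cast
      linear_combination (-(a:ℂ)^2-b) * key - (α + a)*(β:ℂ)^2 * hαroot
    | (n+3) =>
      have i0 := ih n (by omega)
      have i1 := ih (n+1) (by omega)
      have i2 := ih (n+2) (by omega)
      rw [Tseq_rec, Xseq_rec, Yseq_rec]
      push_cast
      linear_combination (a:ℂ) * i2 + (b:ℂ) * i1 + i0 - α^(n+2) * (β:ℂ)^2 * hαroot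

lemma sum_mul (a b : ℤ) (β : ℝ) (hβroot : β ^ 3 = a * β ^ 2 + b * β + 1)
    (α : ℂ) (hαim : α.im ≠ 0) (hαroot : α ^ 3 = a * α ^ 2 + b * α + 1)
    (d : ℕ → ℕ) (K : ℕ) :
    ((-1:ℂ) - b*α) * ((∑ i ∈ Finset.range K, (d i : ℂ) * (Tseq a b i : ℂ)) * (β:ℂ)
        - (∑ i ∈ Finset.range K, (d i : ℂ) * (Xseq a b i : ℂ)) * (β:ℂ)^2)
      + (-α) * ((∑ i ∈ Finset.range K, (d i : ℂ) * (Tseq a b i : ℂ))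
        - (∑ i ∈ Finset.range K, (d i : ℂ) * (Yseq a b i : ℂ)) * (β:ℂ)^2)
      = (∑ i ∈ Finset.range K, (d i : ℂ) * α^(i+2)) * (β:ℂ)^2 := by
  induction K with
  | zero => simp
  | succ n ih =>
    rw [Finset.sum_range_succ, Finset.sum_range_succ, Finset.sum_range_succ,
      Finset.sum_range_succ]
    linear_combination ih + (d n : ℂ) * main_mul a b β hβroot α hαim hαroot n

/-- There exists a bijective ℝ-linear map `f : ℝ² → ℂ` with `f(𝓔) = 𝓡` and
`f(ℤ²) = ℤ + ℤα`. -/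
theorem exists_linear_map_Ecal_to_Rauzy (a b : ℤ) (hab : -a + 1 ≤ b) (hb : b ≤ -2)
    (β : ℝ) (hβ : 1 < β) (hβroot : β ^ 3 = a * β ^ 2 + b * β + 1)
    (α : ℂ) (hαim : α.im ≠ 0) (hαroot : α ^ 3 = a * α ^ 2 + b * α + 1)
    (hαabs : ‖α‖ < 1) :
    ∃ f : (Fin 2 → ℝ) →ₗ[ℝ] ℂ, Function.Bijective f ∧
      f '' EcalSet a b β = RauzyFractal a b α ∧
      f '' {x | ∃ g : Fin 2 → ℤ, x = fun i => (g i : ℝ)} =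
        {z | ∃ p q : ℤ, z = (p : ℂ) + (q : ℂ) * α} := by
  have ha : 3 ≤ a := by omega
  have hβpos : (0:ℝ) < β := by linarith
  have hβ0 : ((β:ℂ)) ≠ 0 := by
    simp only [ne_eq, Complex.ofReal_eq_zero]; positivity
  -- the linear map
  set f : (Fin 2 → ℝ) →ₗ[ℝ] ℂ :=
    { toFun := fun x => ((-1:ℂ) - b*α) * (x 0 : ℂ) + (-α) * (x 1 : ℂ)
      map_add' := by intro x y; push_cast [Pi.add_apply]; ring
      map_smul' := by
        intro r x
        simp only [Pi.smul_apply, smul_eq_mul, RingHom.id_apply, Complex.real_smul]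
        push_cast
        ring } with hfdef
  have hfapp : ∀ x : Fin 2 → ℝ, f x = ((-1:ℂ) - b*α) * (x 0 : ℂ) + (-α) * (x 1 : ℂ) :=
    fun x => rfl
  -- bijectivity
  have hinj : Function.Injective f := by
    intro x y h
    rw [hfapp, hfapp] at h
    have him := congrArg Complex.im h
    have hre := congrArg Complex.re h
    simp only [Complex.add_im, Complex.add_re, Complex.mul_im, Complex.sub_im, Complex.sub_re,
      Complex.neg_im, Complex.neg_re, Complex.one_im, Complex.one_re, Complex.mul_re,
      Complex.intCast_im, Complex.intCast_re, Complex.ofReal_re, Complex.ofReal_im] at him hre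
    have e1 : (b:ℝ) * x 0 + x 1 = (b:ℝ) * y 0 + y 1 := by
      refine mul_left_cancel₀ hαim ?_
      linear_combination -him
    have e0 : x 0 = y 0 := by linear_combination -hre - α.re * e1
    have e2 : x 1 = y 1 := by linear_combination e1 - (b:ℝ) * e0
    funext i
    fin_cases i
    · exact e0
    · exact e2
  have hsurj : Function.Surjective f := by
    intro z
    refine ⟨![-z.re - α.re * (-z.im / α.im), (-z.im / α.im) - b * (-z.re - α.re * (-z.im / α.im))], ?_⟩
    rw [hfapp]
    simp only [Matrix.cons_val_zero, Matrix.cons_val_one, Matrix.head_cons]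
    apply Complex.ext
    · simp only [Complex.add_re, Complex.mul_re, Complex.sub_re, Complex.sub_im,
        Complex.neg_re, Complex.neg_im, Complex.one_re, Complex.one_im, Complex.intCast_re,
        Complex.intCast_im, Complex.ofReal_re, Complex.ofReal_im]
      field_simp
      ring
    · simp only [Complex.add_im, Complex.mul_im, Complex.sub_re, Complex.sub_im,
        Complex.neg_re, Complex.neg_im, Complex.one_re, Complex.one_im, Complex.intCast_re,
        Complex.intCast_im, Complex.ofReal_re, Complex.ofReal_im]
      field_simp
      ring
  have hbij : Function.Bijective f := ⟨hinj, hsurj⟩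
  refine ⟨f, hbij, ?_, ?_⟩
  · -- fractal image
    have himg : f '' EcalSet a b β = closure (f '' {x | ∃ N : ℕ, 0 < N ∧ ∃ d : ℕ → ℕ,
        IsAdmissible a b d ∧ (N : ℤ) = ∑ᶠ i : ℕ, (d i : ℤ) * Tseq a b i ∧
        x = deltaVec a b β N d}) := by
      have hEc : ⇑(LinearEquiv.ofBijective f hbij).toContinuousLinearEquiv.toHomeomorph = ⇑f := rfl
      unfold EcalSet
      rw [← hEc]
      exact Homeomorph.image_closure _ _
    rw [himg]
    -- image of a single `δ(N)`
    have fdelta : ∀ (d : ℕ → ℕ) (K N : ℕ), (∀ i, K ≤ i → d i = 0) →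
        ((N : ℤ) = ∑ᶠ i : ℕ, (d i : ℤ) * Tseq a b i) →
        f (deltaVec a b β N d) = ∑ i ∈ Finset.range (K+2), (d i : ℂ) * α ^ (i + 2) := by
      intro d K N hdK hN
      have h1 : (∑ᶠ j : ℕ, (d (j + 1) : ℝ) * (Tseq a b j : ℝ))
          = ∑ j ∈ Finset.range (K+1), (d (j + 1) : ℝ) * (Tseq a b j : ℝ) := by
        apply finsum_eq_finset_sum_of_support_subset
        intro j hj
        simp only [Function.mem_support, Finset.coe_range, Set.mem_Iio] at hj ⊢
        by_contra h
        push_neg at h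
        exact hj (by rw [hdK (j+1) (by omega)]; simp)
      have h2 : (∑ᶠ j : ℕ, (d (j + 2) : ℝ) * (Tseq a b j : ℝ))
          = ∑ j ∈ Finset.range K, (d (j + 2) : ℝ) * (Tseq a b j : ℝ) := by
        apply finsum_eq_finset_sum_of_support_subset
        intro j hj
        simp only [Function.mem_support, Finset.coe_range, Set.mem_Iio] at hj ⊢
        by_contra h
        push_neg at h
        exact hj (by rw [hdK (j+2) (by omega)]; simp)
      have hNz : (N:ℤ) = ∑ i ∈ Finset.range (K+2), (d i : ℤ) * Tseq a b i := by
        rw [hN]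
        apply finsum_eq_finset_sum_of_support_subset
        intro i hi
        simp only [Function.mem_support, Finset.coe_range, Set.mem_Iio] at hi ⊢
        by_contra h
        push_neg at h
        exact hi (by rw [hdK i (by omega)]; simp)
      have hNs : ((N : ℝ)) = ∑ i ∈ Finset.range (K+2), (d i : ℝ) * (Tseq a b i : ℝ) := by
        have := congrArg (fun z : ℤ => (z:ℝ)) hNz
        push_cast at this
        exact this
      rw [hfapp]
      unfold deltaVec
      simp only [Matrix.cons_val_zero, Matrix.cons_val_one, Matrix.head_cons]
      rw [h1, h2, hNs]
      have hs := sum_mul a b β hβroot α hαim hαroot d (K+2)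
      have hXs : (∑ i ∈ Finset.range (K+2), (d i : ℂ) * (Xseq a b i : ℂ))
          = ∑ j ∈ Finset.range (K+1), (d (j+1) : ℂ) * (Tseq a b j : ℂ) := by
        rw [Finset.sum_range_succ' _ (K+1)]
        simp [Xseq]
      have hYs : (∑ i ∈ Finset.range (K+2), (d i : ℂ) * (Yseq a b i : ℂ))
          = ∑ j ∈ Finset.range K, (d (j+2) : ℂ) * (Tseq a b j : ℂ) := by
        rw [Finset.sum_range_succ' _ (K+1), Finset.sum_range_succ' _ K]
        simp [Yseq]
      rw [hXs, hYs] at hs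
      push_cast
      field_simp
      linear_combination hs
    -- bound on digits and geometric domination
    set A' : ℕ := a.toNat with hA'
    have hA'a : (A' : ℤ) = a := Int.toNat_of_nonneg (by omega)
    have hgeo : Summable (fun i : ℕ => ((A':ℝ) * ‖α‖ ^ 2) * ‖α‖ ^ i) :=
      (summable_geometric_of_lt_one (norm_nonneg _) hαabs).mul_left _
    have hbound : ∀ (d : ℕ → ℕ), (∀ i, d i ≤ A') → ∀ i : ℕ,
        ‖(d i : ℂ) * α ^ (i+2)‖ ≤ ((A':ℝ) * ‖α‖ ^ 2) * ‖α‖ ^ i := by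
      intro d hd i
      rw [norm_mul, norm_pow, Complex.norm_natCast]
      calc (d i : ℝ) * ‖α‖ ^ (i+2) ≤ (A' : ℝ) * ‖α‖ ^ (i+2) := by
            gcongr
            exact_mod_cast hd i
        _ = ((A':ℝ) * ‖α‖ ^ 2) * ‖α‖ ^ i := by ring
    -- the fractal is a continuous image of a compact set, hence closed
    have hcont : Continuous (fun p : (ℕ → Fin (A'+1)) => ∑' i : ℕ, ((p i : ℕ) : ℂ) * α ^ (i+2)) := by
      apply continuous_tsum ?_ hgeo ?_
      · intro i
        exact (continuous_of_discreteTopology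
          (f := fun v : Fin (A'+1) => ((v : ℕ) : ℂ) * α ^ (i+2))).comp (continuous_apply i)
      · intro n p
        exact hbound (fun i => (p i : ℕ)) (fun i => Nat.lt_succ_iff.mp (p i).isLt) n
    set Dc : Set (ℕ → Fin (A'+1)) := {p | AdmissibleWord a b (fun i => (p i : ℕ))} with hDc
    have hDcc : IsClosed Dc := by
      have hDeq : Dc = ⋂ (j : ℕ), ⋂ (k : ℕ),
          {p : ℕ → Fin (A'+1) | k ≤ j → WordLe a b (fun i => (p i : ℕ)) j k} := by
        ext p
        simp only [hDc, Set.mem_setOf_eq, Set.mem_iInter, AdmissibleWord]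
      rw [hDeq]
      refine isClosed_iInter fun j => isClosed_iInter fun k => ?_
      by_cases hk : k ≤ j
      · simp only [hk, forall_true_left]
        have heq : {p : ℕ → Fin (A'+1) | WordLe a b (fun i => (p i : ℕ)) j k}
            = (fun (p : ℕ → Fin (A'+1)) (t : Fin (k+1)) => p (j - (k - (t:ℕ)))) ⁻¹'
              {w : Fin (k+1) → Fin (A'+1) | WordLe a b
                (fun s => if h : s < k+1 then ((w ⟨s, h⟩ : Fin (A'+1)) : ℕ) else 0) k k} := by
          ext p
          simp only [Set.mem_setOf_eq, Set.mem_preimage]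
          constructor
          · intro h
            refine wordLe_congr a b (fun i => (p i : ℕ)) _ j k k (fun i hi => ?_) h
            have h1 : k - i < k + 1 := by omega
            simp only [dif_pos h1]
            congr 2
            omega
          · intro h
            refine wordLe_congr a b _ (fun i => (p i : ℕ)) k j k (fun i hi => ?_) h
            have h1 : k - i < k + 1 := by omega
            simp only [dif_pos h1]
            congr 2
            omega
        rw [heq]
        exact (isClosed_discrete _).preimage (continuous_pi fun t => continuous_apply _)
      · simp only [hk, false_implies, Set.setOf_true]
        exact isClosed_univ
    have hRclosed : IsClosed (RauzyFractal a b α) := by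
      have hRim : RauzyFractal a b α
          = (fun p : (ℕ → Fin (A'+1)) => ∑' i : ℕ, ((p i : ℕ):ℂ) * α^(i+2)) '' Dc := by
        ext z
        constructor
        · rintro ⟨d, hd, rfl⟩
          have hlt : ∀ i, d i < A' + 1 := fun i => by
            have := digit_le a b d hd i; omega
          refine ⟨fun i => ⟨d i, hlt i⟩, hd, rfl⟩
        · rintro ⟨p, hp, rfl⟩
          exact ⟨fun i => (p i : ℕ), hp, rfl⟩
      rw [hRim]
      exact ((hDcc.isCompact).image hcont).isClosed
    -- inclusion of the image of S in the fractal
    have hsub : f '' {x | ∃ N : ℕ, 0 < N ∧ ∃ d : ℕ → ℕ,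
        IsAdmissible a b d ∧ (N : ℤ) = ∑ᶠ i : ℕ, (d i : ℤ) * Tseq a b i ∧
        x = deltaVec a b β N d} ⊆ RauzyFractal a b α := by
      rintro z ⟨x, ⟨N, hNpos, d, ⟨hdfin, hdadm⟩, hN, rfl⟩, rfl⟩
      obtain ⟨K, hK⟩ : ∃ K : ℕ, ∀ i, K ≤ i → d i = 0 := by
        obtain ⟨K, hK⟩ := hdfin.bddAbove
        refine ⟨K+1, fun i hi => ?_⟩
        by_contra h
        have := hK (Function.mem_support.2 h)
        omega
      refine ⟨d, hdadm, ?_⟩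
      rw [fdelta d K N hK hN]
      refine (tsum_eq_sum fun i hi => ?_).symm
      rw [hK i ?_]
      · simp
      · simp only [Finset.mem_range, not_lt] at hi
        omega
    -- the fractal is contained in the closure of the image of S
    have hsup : RauzyFractal a b α ⊆ closure (f '' {x | ∃ N : ℕ, 0 < N ∧ ∃ d : ℕ → ℕ,
        IsAdmissible a b d ∧ (N : ℤ) = ∑ᶠ i : ℕ, (d i : ℤ) * Tseq a b i ∧
        x = deltaVec a b β N d}) := by
      rintro z ⟨d, hd, rfl⟩
      have hdle : ∀ i, d i ≤ A' := fun i => by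
        have := digit_le a b d hd i; omega
      have hsummable : Summable (fun i : ℕ => (d i : ℂ) * α ^ (i+2)) :=
        Summable.of_norm_bounded hgeo (hbound d hdle)
      by_cases hd0 : ∀ i, d i = 0
      · have hz : ∑' i : ℕ, (d i : ℂ) * α ^ (i+2) = 0 := by simp [hd0]
        rw [hz]
        have htd : Filter.Tendsto (fun n : ℕ => α ^ (n+2)) Filter.atTop (nhds 0) := by
          have h := tendsto_pow_atTop_nhds_zero_of_norm_lt_one
            (show ‖α‖ < 1 from hαabs)
          have h2 := h.mul_const (α^2)
          simpa [pow_add] using h2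
        apply mem_closure_of_tendsto htd
        apply Filter.Eventually.of_forall
        intro n
        set e : ℕ → ℕ := fun i => if i = n then 1 else 0 with he
        have heK : ∀ i, n+1 ≤ i → e i = 0 := fun i hi => by simp only [he]; rw [if_neg]; omega
        have hTpos := (Tseq_pos a b ha hab hb n).1
        have heN : (((Tseq a b n).toNat : ℤ)) = ∑ᶠ i : ℕ, (e i : ℤ) * Tseq a b i := by
          rw [finsum_eq_finset_sum_of_support_subset _ (s := Finset.range (n+1))]
          · have hterm : ∀ i, (e i : ℤ) * Tseq a b i = if i = n then Tseq a b i else 0 := by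
              intro i
              simp only [he]
              split <;> simp
            simp_rw [hterm]
            rw [Finset.sum_ite_eq' (Finset.range (n+1)) n]
            simp [Int.toNat_of_nonneg (le_of_lt hTpos)]
          · intro i hi
            simp only [Function.mem_support, Finset.coe_range, Set.mem_Iio] at hi ⊢
            by_contra h
            push_neg at h
            exact hi (by rw [heK i (by omega)]; simp)
        refine ⟨deltaVec a b β (Tseq a b n).toNat e,
          ⟨(Tseq a b n).toNat, by omega, e, ⟨?_, admissible_of_small a b e (fun j => by
            simp only [he]; split <;> omega)⟩, heN, rfl⟩, ?_⟩
        · apply Set.Finite.subset (Set.finite_singleton n)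
          intro i hi
          simp only [Function.mem_support, he] at hi
          by_contra h
          simp only [Set.mem_singleton_iff] at h
          rw [if_neg h] at hi
          exact hi rfl
        · rw [fdelta e (n+1) _ heK heN]
          have : ∀ i, (e i : ℂ) * α^(i+2) = if i = n then α^(i+2) else 0 := by
            intro i
            simp only [he]
            split <;> simp
          simp_rw [this]
          rw [Finset.sum_ite_eq' (Finset.range (n+3)) n]
          simp
      · push_neg at hd0
        obtain ⟨n₀, hn₀⟩ := hd0
        apply mem_closure_of_tendsto (hsummable.hasSum.tendsto_sum_nat)
        rw [Filter.eventually_atTop]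
        refine ⟨n₀+1, fun K hK => ?_⟩
        set d' : ℕ → ℕ := fun i => if i < K then d i else 0 with hd'
        set NK : ℕ := ∑ i ∈ Finset.range K, d i * (Tseq a b i).toNat with hNK
        have hd'K : ∀ i, K ≤ i → d' i = 0 := fun i hi => by
          simp only [hd']; rw [if_neg]; omega
        have hNKz : ((NK:ℤ)) = ∑ᶠ i : ℕ, (d' i : ℤ) * Tseq a b i := by
          rw [finsum_eq_finset_sum_of_support_subset _ (s := Finset.range K)]
          · rw [hNK]
            push_cast
            apply Finset.sum_congr rfl
            intro i hi
            rw [Int.toNat_of_nonneg (le_of_lt (Tseq_pos a b ha hab hb i).1)]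
            simp only [hd']
            rw [if_pos (Finset.mem_range.1 hi)]
          · intro i hi
            simp only [Function.mem_support, Finset.coe_range, Set.mem_Iio] at hi ⊢
            by_contra h
            push_neg at h
            exact hi (by rw [hd'K i h]; simp)
        have hNKpos : 0 < NK := by
          have h1 : 0 < (Tseq a b n₀).toNat := by
            have := (Tseq_pos a b ha hab hb n₀).1
            omega
          have h2 : 0 < d n₀ * (Tseq a b n₀).toNat := Nat.mul_pos (by omega) h1
          calc 0 < d n₀ * (Tseq a b n₀).toNat := h2
            _ ≤ NK := Finset.single_le_sum (f := fun i => d i * (Tseq a b i).toNat)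
                (fun i _ => Nat.zero_le _) (Finset.mem_range.2 (by omega))
        refine ⟨deltaVec a b β NK d',
          ⟨NK, hNKpos, d', ⟨?_, admissible_trunc a b ha d K hd⟩, hNKz, rfl⟩, ?_⟩
        · apply Set.Finite.subset (Set.finite_Iio K)
          intro i hi
          simp only [Function.mem_support, hd'] at hi
          simp only [Set.mem_Iio]
          by_contra h
          rw [if_neg h] at hi
          exact hi rfl
        · rw [fdelta d' K NK hd'K hNKz]
          rw [Finset.sum_range_succ, Finset.sum_range_succ]
          have hz1 : d' K = 0 := hd'K K le_rfl
          have hz2 : d' (K+1) = 0 := hd'K (K+1) (by omega)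
          rw [hz1, hz2]
          simp only [Nat.cast_zero, zero_mul, add_zero]
          apply Finset.sum_congr rfl
          intro i hi
          simp only [hd']
          rw [if_pos (Finset.mem_range.1 hi)]
    exact Set.Subset.antisymm (closure_minimal hsub hRclosed) hsup
  · -- lattice image
    ext z
    simp only [Set.mem_image, Set.mem_setOf_eq]
    constructor
    · rintro ⟨x, ⟨g, rfl⟩, rfl⟩
      refine ⟨-g 0, -(b * g 0 + g 1), ?_⟩
      rw [hfapp]
      push_cast
      ring
    · rintro ⟨p, q, rfl⟩
      refine ⟨fun i => ((![-p, b*p - q] : Fin 2 → ℤ) i : ℝ), ⟨![-p, b*p - q], rfl⟩, ?_⟩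
      rw [hfapp]
      simp only [Matrix.cons_val_zero, Matrix.cons_val_one, Matrix.head_cons]
      push_cast
      ring
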